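/- Let Γ be a connected, locally finite, infinite graph such that Aut(Γ)\Γ is finite. Then Γ contains a bi-infinite geodesic. -/

import Mathlib

open Pointwise

universe u

namespace CFGroups

variable {V : Type u}

/-- The edge boundary of `C`: adjacent ordered pairs `(u,v)` with `u ∈ C`, `v ∉ C`.
These are in canonical bijection with the undirected edges of `δC`. -/
def edgeBoundary (G : SimpleGraph V) (C : Set V) : Set (V × V) :=
  {p : V × V | G.Adj p.1 p.2 ∧ p.1 ∈ C ∧ p.2 ∉ C}

/-- The vertex boundary `βC`: endpoints of edges of `δC`. -/
def vertexBoundary (G : SimpleGraph V) (C : Set V) : Set V :=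
  {u : V | ∃ v : V, G.Adj u v ∧ ((u ∈ C ∧ v ∉ C) ∨ (v ∈ C ∧ u ∉ C))}

/-- A cut: `C` and its complement are nonempty and connected, and `δC` is finite. -/
def IsCut (G : SimpleGraph V) (C : Set V) : Prop :=
  C.Nonempty ∧ Cᶜ.Nonempty ∧ (G.induce C).Connected ∧ (G.induce Cᶜ).Connected ∧
    (edgeBoundary G C).Finite

/-- The weight `|δC|` of a cut. -/
noncomputable def weight (G : SimpleGraph V) (C : Set V) : ℕ :=
  (edgeBoundary G C).ncard

/-- A `k`-cut: a cut of weight at most `k`. -/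
def IsCutLe (G : SimpleGraph V) (k : ℕ) (C : Set V) : Prop :=
  IsCut G C ∧ weight G C ≤ k

/-- Two cuts are nested. -/
def Nested (C D : Set V) : Prop :=
  C ⊆ D ∨ C ⊆ Dᶜ ∨ Cᶜ ⊆ D ∨ Cᶜ ⊆ Dᶜ

/-- A bi-infinite simple path, as an injective `ℤ`-indexed sequence of successively
adjacent vertices. -/
def IsBiInfinitePath (G : SimpleGraph V) (α : ℤ → V) : Prop :=
  Function.Injective α ∧ ∀ i : ℤ, G.Adj (α i) (α (i + 1))

/-- A one-sided infinite simple path. -/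
def IsRayPath (G : SimpleGraph V) (γ : ℕ → V) : Prop :=
  Function.Injective γ ∧ ∀ i : ℕ, G.Adj (γ i) (γ (i + 1))

/-- `C(α)`: the cuts splitting the bi-infinite simple path `α` into two infinite pieces. -/
def cutsSplitting (G : SimpleGraph V) (α : ℤ → V) : Set (Set V) :=
  {C : Set V | IsCut G C ∧ (Set.range α ∩ C).Infinite ∧ (Set.range α ∩ Cᶜ).Infinite}

/-- `C_min(α)`: the cuts of minimal weight in `C(α)`. -/
def cutsMin (G : SimpleGraph V) (α : ℤ → V) : Set (Set V) :=
  {C ∈ cutsSplitting G α | ∀ D ∈ cutsSplitting G α, weight G C ≤ weight G D}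

/-- `Γ` is accessible with constant `k`: every bi-infinite simple path with `C(α) ≠ ∅`
admits a `k`-cut in `C(α)`. -/
def AccessibleWith (G : SimpleGraph V) (k : ℕ) : Prop :=
  ∀ α : ℤ → V, IsBiInfinitePath G α → (cutsSplitting G α).Nonempty →
    ∃ C ∈ cutsSplitting G α, weight G C ≤ k

/-- An accessible graph. -/
def Accessible (G : SimpleGraph V) : Prop := ∃ k : ℕ, AccessibleWith G k

/-- `m(C)`: the number of `k`-cuts not nested with `C`. -/
noncomputable def mdeg (G : SimpleGraph V) (k : ℕ) (C : Set V) : ℕ :=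
  Set.ncard {D : Set V | IsCutLe G k D ∧ ¬ Nested C D}

/-- `C_opt(α)`: the cuts of `C_min(α)` minimizing `m`. -/
def cutsOpt (G : SimpleGraph V) (k : ℕ) (α : ℤ → V) : Set (Set V) :=
  {C ∈ cutsMin G α | ∀ D ∈ cutsMin G α, mdeg G k C ≤ mdeg G k D}

/-- `C_opt`: the optimally nested cuts. -/
def COpt (G : SimpleGraph V) (k : ℕ) : Set (Set V) :=
  {C : Set V | ∃ α : ℤ → V, IsBiInfinitePath G α ∧ C ∈ cutsOpt G k α}

/-- The relation `C ∼ D` on optimal cuts. -/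
def SimRel (G : SimpleGraph V) (k : ℕ) (C D : Set V) : Prop :=
  C = D ∨ (Cᶜ ⊂ D ∧ ∀ E ∈ COpt G k, Cᶜ ⊂ E → E ⊆ D → E = D)

/-- The equivalence class `[C]` of an optimal cut `C` under `∼`. -/
def cls (G : SimpleGraph V) (k : ℕ) (C : Set V) : Set (Set V) :=
  {D ∈ COpt G k | SimRel G k C D}

/-- The structure tree `T(C_opt)`: vertices are the classes `[C]`, `C ∈ C_opt`, and for each
`C ∈ C_opt` there is an edge joining `[C]` and `[C*]`. -/
def structureTree (G : SimpleGraph V) (k : ℕ) :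
    SimpleGraph {S : Set (Set V) // ∃ C ∈ COpt G k, S = cls G k C} where
  Adj X Y := X ≠ Y ∧ ∃ C ∈ COpt G k,
    (X.1 = cls G k C ∧ Y.1 = cls G k Cᶜ) ∨ (Y.1 = cls G k C ∧ X.1 = cls G k Cᶜ)
  symm := ⟨by
    rintro X Y ⟨hne, C, hC, h⟩
    exact ⟨hne.symm, C, hC, h.symm⟩⟩
  loopless := ⟨fun X h => h.1 rfl⟩

/-- A locally finite graph. -/
def LocallyFiniteGraph (G : SimpleGraph V) : Prop :=
  ∀ v : V, (G.neighborSet v).Finite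

/-- The `r`-th neighbourhood `N^r S` of a set of vertices. -/
def nbhd (G : SimpleGraph V) (r : ℕ) (S : Set V) : Set V :=
  {v : V | ∃ u ∈ S, G.dist v u ≤ r}

/-- The block `B[C] = ⋂_{D ∼ C} N^κ D` assigned to the vertex `[C]` of the structure tree. -/
def block (G : SimpleGraph V) (k κ : ℕ) (C : Set V) : Set V :=
  ⋂ D ∈ cls G k C, nbhd G κ D

/-- `Aut(Γ)\Γ` is finite: the automorphism group of `Γ` acts with finitely many
vertex orbits and finitely many edge orbits. -/
def AutFinOrbits (G : SimpleGraph V) : Prop :=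
  (Set.range fun v : V => Set.range fun φ : G ≃g G => φ v).Finite ∧
  (Set.range fun e : G.edgeSet => Set.range fun φ : G ≃g G => Sym2.map ⇑φ e.1).Finite

/-- A group `H` (equipped with an action on the vertices) acts on the graph `G`
by graph automorphisms. -/
def ActsOn (G : SimpleGraph V) (H : Type u) [Group H] [MulAction H V] : Prop :=
  ∀ (g : H) (u v : V), G.Adj u v ↔ G.Adj (g • u) (g • v)

/-- `G\Γ` is finite: finitely many vertex orbits and finitely many edge orbits. -/
def ActFinOrbits (G : SimpleGraph V) (H : Type u) [Group H] [MulAction H V] : Prop :=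
  (Set.range fun v : V => Set.range fun g : H => g • v).Finite ∧
  (Set.range fun e : G.edgeSet => Set.range fun g : H => Sym2.map (fun v => g • v) e.1).Finite

/-- The graph has more than one end: some finite vertex set can be removed so that at least
two infinite connected components remain. -/
def MoreThanOneEnd (G : SimpleGraph V) : Prop :=
  ∃ S : Set V, S.Finite ∧ ∃ K₁ K₂ : (G.induce Sᶜ).ConnectedComponent,
    K₁ ≠ K₂ ∧ K₁.supp.Infinite ∧ K₂.supp.Infinite

/-- The Cayley graph of a group w.r.t. a generating set `S` (edges labelled by `S ∪ S⁻¹`). -/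
def cayleyGraph (K : Type u) [Group K] (S : Set K) : SimpleGraph K where
  Adj g h := g ≠ h ∧ (g⁻¹ * h ∈ S ∨ h⁻¹ * g ∈ S)
  symm := ⟨by rintro g h ⟨hne, hs⟩; exact ⟨hne.symm, hs.symm⟩⟩
  loopless := ⟨fun g h => h.1 rfl⟩

/-- A finitely generated group all of whose Cayley graphs have at most one end. -/
def FGOneEnded (K : Type u) [Group K] : Prop :=
  Group.FG K ∧ ∀ S : Set K, S.Finite → Subgroup.closure S = ⊤ →
    ¬ MoreThanOneEnd (cayleyGraph K S)

/-- An accessible group: it acts on a tree with finitely many orbits, finite edge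
stabilizers, and all vertex stabilizers finitely generated with at most one end. -/
def GroupAccessible (K : Type u) [Group K] : Prop :=
  ∃ (T : Type u) (tr : SimpleGraph T) (φ : K →* Equiv.Perm T),
    tr.IsTree ∧
    (∀ (g : K) (u v : T), tr.Adj u v ↔ tr.Adj (φ g u) (φ g v)) ∧
    (Set.range fun t : T => Set.range fun g : K => φ g t).Finite ∧
    (Set.range fun e : tr.edgeSet => Set.range fun g : K => Sym2.map ⇑(φ g) e.1).Finite ∧
    (∀ e ∈ tr.edgeSet, {g : K | Sym2.map ⇑(φ g) e = e}.Finite) ∧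
    (∀ t : T, ∃ L : Subgroup K, (L : Set K) = {g : K | φ g t = t} ∧ FGOneEnded ↥L)

/-- A tree decomposition of `G`. -/
def IsTreeDecomp (G : SimpleGraph V) {T : Type u} (tr : SimpleGraph T) (X : T → Set V) : Prop :=
  tr.IsTree ∧ (∀ v : V, ∃ t : T, v ∈ X t) ∧
  (∀ u v : V, G.Adj u v → ∃ t : T, u ∈ X t ∧ v ∈ X t) ∧
  (∀ v : V, (tr.induce {t : T | v ∈ X t}).Connected)

/-- `G` has treewidth at most `w`. -/
def TreewidthAtMost (G : SimpleGraph V) (w : ℕ) : Prop :=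
  ∃ (T : Type u) (tr : SimpleGraph T) (X : T → Set V),
    IsTreeDecomp G tr X ∧ ∀ t : T, (X t).Finite ∧ (X t).ncard ≤ w + 1

/-- `G` has finite treewidth. -/
def FiniteTreewidth (G : SimpleGraph V) : Prop := ∃ w : ℕ, TreewidthAtMost G w

/-- Uniformly bounded vertex degrees. -/
def UnifBoundedDegree (G : SimpleGraph V) : Prop :=
  ∃ d : ℕ, ∀ v : V, (G.neighborSet v).Finite ∧ (G.neighborSet v).ncard ≤ d

/-- A class of groups (in universe `u`), as a property of groups. -/
def VirtuallyIn (𝒢 : (K : Type u) → [inst : Group K] → Prop) (K : Type u) [Group K] : Prop :=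
  ∃ L : Subgroup K, L.FiniteIndex ∧ 𝒢 ↥L

/-- `K` has a quasi-isometric section: for some monoid presentation `π : Σ* → K` with
finite alphabet there is a section `σ` of `π` with `σ(1) = ε` which is quasi-isometric
w.r.t. the tree metric on `Σ*`; `d(u,v) ≤ k` is expressed via a common prefix
decomposition `u = p u'`, `v = p v'` with `|u'| + |v'| ≤ k`. -/
def HasQIS (K : Type u) [Group K] : Prop :=
  ∃ (A : Type u) (_ : Finite A) (π : List A → K),
    (∀ u v : List A, π (u ++ v) = π u * π v) ∧ π [] = 1 ∧ Function.Surjective π ∧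
    ∃ (σ : K → List A) (k : ℕ), 1 ≤ k ∧ σ 1 = [] ∧ (∀ g : K, π (σ g) = g) ∧
      ∀ (g : K) (a : A), ∃ p u' v' : List A,
        σ g = p ++ u' ∧ σ (g * π [a]) = p ++ v' ∧ u'.length + v'.length ≤ k

/-- A context-free group: the word problem w.r.t. some surjective monoid presentation
over a finite alphabet is a context-free language. -/
def IsContextFreeGroup (K : Type u) [Group K] : Prop :=
  ∃ (A : Type u) (_ : Finite A) (π : List A → K),
    (∀ u v : List A, π (u ++ v) = π u * π v) ∧ π [] = 1 ∧ Function.Surjective π ∧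
    Language.IsContextFree ({w : List A | π w = 1} : Language A)

end CFGroups


namespace CFGroupsAux

open Filter

variable {V : Type*} {G : SimpleGraph V}

/-- Ultrafilter pigeonhole on a finite target set. -/
theorem ultra_pigeon {β : Type*} (U : Ultrafilter ℕ) (f : ℕ → β) {S : Set β}
    (hS : S.Finite) (hmem : {n | f n ∈ S} ∈ U) : ∃ y ∈ S, {n | f n = y} ∈ U := by
  by_contra h
  push_neg at h
  have h2 : ∀ y ∈ S, {n | f n ≠ y} ∈ U := by
    intro y hy
    have := h y hy
    have : {n | f n = y}ᶜ ∈ U := (Ultrafilter.compl_mem_iff_notMem).2 this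
    simpa [Set.compl_setOf] using this
  have hI : (⋂ y ∈ S, {n | f n ≠ y}) ∈ (U : Filter ℕ) :=
    (Filter.biInter_mem hS).2 h2
  have : ((⋂ y ∈ S, {n | f n ≠ y}) ∩ {n | f n ∈ S}) ∈ (U : Filter ℕ) :=
    Filter.inter_mem hI hmem
  obtain ⟨n, hn1, hn2⟩ := Ultrafilter.nonempty_of_mem this
  simp only [Set.mem_iInter] at hn1
  exact hn1 (f n) hn2 rfl

theorem dist_getVert_le (hconn : G.Connected) {u v : V} (p : G.Walk u v)
    {i j : ℕ} (hij : i ≤ j) : G.dist (p.getVert i) (p.getVert j) ≤ j - i := by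
  obtain ⟨d, rfl⟩ := Nat.exists_eq_add_of_le hij
  induction d with
  | zero => simp [SimpleGraph.dist_self]
  | succ d ih =>
    have h1 : G.dist (p.getVert (i + d)) (p.getVert (i + d + 1)) ≤ 1 := by
      by_cases hlen : i + d < p.length
      · exact le_of_eq (SimpleGraph.dist_eq_one_iff_adj.2 (p.adj_getVert_succ hlen))
      · have h2 : p.getVert (i + d) = v := p.getVert_of_length_le (by omega)
        have h3 : p.getVert (i + d + 1) = v := p.getVert_of_length_le (by omega)
        rw [h2, h3, SimpleGraph.dist_self]; omega
    calc G.dist (p.getVert i) (p.getVert (i + (d + 1)))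
        ≤ G.dist (p.getVert i) (p.getVert (i + d)) +
            G.dist (p.getVert (i + d)) (p.getVert (i + d + 1)) := by
          have := hconn.dist_triangle (u := p.getVert i) (v := p.getVert (i + d))
            (w := p.getVert (i + (d+1)))
          simpa only [Nat.add_assoc] using this
      _ ≤ d + 1 := by have := ih (by omega); omega
      _ = i + (d + 1) - i := by omega

theorem geodesic_getVert (hconn : G.Connected) {u v : V} (p : G.Walk u v)
    (hp : p.length = G.dist u v) {i j : ℕ} (hij : i ≤ j) (hj : j ≤ p.length) :
    G.dist (p.getVert i) (p.getVert j) = j - i := by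
  refine le_antisymm (dist_getVert_le hconn p hij) ?_
  have h1 : G.dist u (p.getVert i) ≤ i := by
    have := dist_getVert_le hconn p (Nat.zero_le i)
    simpa [p.getVert_zero] using this
  have h2 : G.dist (p.getVert j) v ≤ p.length - j := by
    have := dist_getVert_le hconn p hj
    simpa [p.getVert_length] using this
  have h3 : G.dist u v ≤ G.dist u (p.getVert i) + G.dist (p.getVert i) v :=
    hconn.dist_triangle
  have h4 : G.dist (p.getVert i) v ≤
      G.dist (p.getVert i) (p.getVert j) + G.dist (p.getVert j) v :=
    hconn.dist_triangle
  omega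

theorem iso_dist_le (hconn : G.Connected) (φ : G ≃g G) (u v : V) :
    G.dist (φ u) (φ v) ≤ G.dist u v := by
  obtain ⟨p, hp⟩ := hconn.exists_walk_length_eq_dist u v
  have := SimpleGraph.dist_le (p.map φ.toHom)
  simpa [hp] using this

theorem iso_dist (hconn : G.Connected) (φ : G ≃g G) (u v : V) :
    G.dist (φ u) (φ v) = G.dist u v := by
  refine le_antisymm (iso_dist_le hconn φ u v) ?_
  have := iso_dist_le hconn φ.symm (φ u) (φ v)
  simpa using this

theorem ball_finite (hconn : G.Connected) (hlf : ∀ w : V, (G.neighborSet w).Finite)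
    (v : V) (r : ℕ) : {u : V | G.dist v u ≤ r}.Finite := by
  induction r with
  | zero =>
    have : {u : V | G.dist v u ≤ 0} ⊆ {v} := by
      intro u hu
      simp only [Set.mem_setOf_eq, Nat.le_zero] at hu
      exact ((hconn.dist_eq_zero_iff).1 hu).symm
    exact Set.Finite.subset (Set.finite_singleton v) this
  | succ r ih =>
    have hsub : {u : V | G.dist v u ≤ r + 1} ⊆
        {u : V | G.dist v u ≤ r} ∪ ⋃ w ∈ {u : V | G.dist v u ≤ r}, G.neighborSet w := by
      intro u hu
      simp only [Set.mem_setOf_eq] at hu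
      by_cases hr : G.dist v u ≤ r
      · exact Or.inl hr
      · have hd : G.dist v u = r + 1 := by omega
        obtain ⟨p, hp⟩ := hconn.exists_walk_length_eq_dist v u
        have hlen : p.length = r + 1 := by rw [hp, hd]
        refine Or.inr ?_
        refine Set.mem_biUnion (x := p.getVert r) ?_ ?_
        · have := dist_getVert_le hconn p (Nat.zero_le r)
          simpa [p.getVert_zero] using this
        · have hadj : G.Adj (p.getVert r) (p.getVert (r + 1)) :=
            p.adj_getVert_succ (by omega)
          have : p.getVert (r + 1) = u := by
            have := p.getVert_length; rwa [hlen] at this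
          rw [this] at hadj
          exact hadj
    exact Set.Finite.subset (ih.union (ih.biUnion fun w _ => hlf w)) hsub

theorem exists_dist_eq (hconn : G.Connected) (hlf : ∀ w : V, (G.neighborSet w).Finite)
    [Infinite V] (v : V) (n : ℕ) : ∃ u : V, G.dist v u = n := by
  have hball := ball_finite hconn hlf v n
  obtain ⟨u, hu⟩ := (Set.Infinite.nonempty (Set.Finite.infinite_compl hball))
  simp only [Set.mem_compl_iff, Set.mem_setOf_eq, not_le] at hu
  obtain ⟨p, hp⟩ := hconn.exists_walk_length_eq_dist v u
  refine ⟨p.getVert n, ?_⟩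
  have := geodesic_getVert hconn p hp (Nat.zero_le n) (by omega)
  simpa [p.getVert_zero] using this

end CFGroupsAux


open CFGroups Pointwise in
/-- A connected, locally finite, infinite graph with `Aut(Γ)\Γ` finite
contains a bi-infinite geodesic. -/
theorem exists_biinfinite_geodesic
    {V : Type u} (G : SimpleGraph V) (hconn : G.Connected)
    (hlf : CFGroups.LocallyFiniteGraph G) (hinf : Infinite V)
    (horb : CFGroups.AutFinOrbits G) :
    ∃ α : ℤ → V, ∀ i j : ℤ, G.dist (α i) (α j) = (i - j).natAbs := by
  have hlf' : ∀ v : V, (G.neighborSet v).Finite := hlf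
  have horb' : (Set.range fun v : V => Set.range fun φ : G ≃g G => φ v).Finite := horb.1
  classical
  have : Infinite V := hinf
  have b : V := Classical.arbitrary V
  -- geodesics of length 2n
  have hex : ∀ n : ℕ, ∃ u : V, G.dist b u = 2 * n := fun n => CFGroupsAux.exists_dist_eq hconn hlf' b (2 * n)
  choose u hu using hex
  have hw : ∀ n : ℕ, ∃ p : G.Walk b (u n), p.length = G.dist b (u n) :=
    fun n => hconn.exists_walk_length_eq_dist b (u n)
  choose p hp using hw
  have hplen : ∀ n, (p n).length = 2 * n := fun n => by rw [hp n, hu n]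
  set β : ℕ → ℤ → V := fun n i => (p n).getVert ((n : ℤ) + i).toNat with hβ
  have key : ∀ (n : ℕ) (i j : ℤ), -(n : ℤ) ≤ i → i ≤ j → j ≤ n →
      G.dist (β n i) (β n j) = (j - i).toNat := by
    intro n i j h1 h2 h3
    have := CFGroupsAux.geodesic_getVert hconn (p n) (hp n)
      (i := ((n : ℤ) + i).toNat) (j := ((n : ℤ) + j).toNat) (by omega) (by rw [hplen n]; omega)
    rw [this]; omega
  -- midpoints and orbits
  set m : ℕ → V := fun n => β n 0 with hm
  set f : V → Set V := fun v => Set.range fun φ : G ≃g G => φ v with hf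
  set U : Ultrafilter ℕ := Filter.hyperfilter ℕ with hU
  obtain ⟨O, hO, hA⟩ := CFGroupsAux.ultra_pigeon U (fun n => f (m n)) horb'
    (by simp only [Set.mem_range]; exact Filter.univ_mem' fun n => ⟨m n, rfl⟩)
  set A : Set ℕ := {n | f (m n) = O} with hAdef
  obtain ⟨n₁, hn₁⟩ := Ultrafilter.nonempty_of_mem hA
  set v0 : V := m n₁ with hv0
  have hv0mem : ∀ n ∈ A, ∃ φ : G ≃g G, φ (m n) = v0 := by
    intro n hn
    have h1 : f (m n) = f (m n₁) := by rw [hn, hn₁]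
    have h2 : v0 ∈ f (m n₁) := ⟨SimpleGraph.Iso.refl, rfl⟩
    rw [← h1] at h2
    exact h2
  set Φ : ℕ → (G ≃g G) := fun n =>
    if h : ∃ φ : G ≃g G, φ (m n) = v0 then h.choose else SimpleGraph.Iso.refl with hΦ
  have hΦspec : ∀ n ∈ A, Φ n (m n) = v0 := by
    intro n hn
    have h := hv0mem n hn
    simp only [hΦ, dif_pos h]
    exact h.choose_spec
  set γ : ℕ → ℤ → V := fun n i => Φ n (β n i) with hγ
  have keyγ : ∀ (n : ℕ) (i j : ℤ), -(n : ℤ) ≤ i → i ≤ j → j ≤ n →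
      G.dist (γ n i) (γ n j) = (j - i).toNat := by
    intro n i j h1 h2 h3
    rw [hγ]
    simp only
    rw [CFGroupsAux.iso_dist hconn (Φ n) (β n i) (β n j)]
    exact key n i j h1 h2 h3
  have hγ0 : ∀ n ∈ A, γ n 0 = v0 := fun n hn => hΦspec n hn
  -- distance from v0
  have hdist0 : ∀ (n : ℕ), n ∈ A → ∀ i : ℤ, i.natAbs ≤ n → G.dist v0 (γ n i) = i.natAbs := by
    intro n hn i hi
    rcases le_or_gt 0 i with h | h
    · have := keyγ n 0 i (by omega) h (by omega)
      rw [← hγ0 n hn]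
      rw [this]; omega
    · have := keyγ n i 0 (by omega) (by omega) (by omega)
      rw [← hγ0 n hn, SimpleGraph.dist_comm]
      rw [this]; omega
  -- ultralimit
  have hlim : ∀ i : ℤ, ∃ y : V, {n | γ n i = y} ∈ U := by
    intro i
    have hball := CFGroupsAux.ball_finite hconn hlf' v0 i.natAbs
    have hmem : {n | γ n i ∈ {w : V | G.dist v0 w ≤ i.natAbs}} ∈ U := by
      have hsub : A ∩ {n | i.natAbs ≤ n} ⊆ {n | γ n i ∈ {w : V | G.dist v0 w ≤ i.natAbs}} := by
        intro n ⟨hn1, hn2⟩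
        simp only [Set.mem_setOf_eq]
        rw [hdist0 n hn1 i hn2]
      refine Filter.mem_of_superset (Filter.inter_mem hA ?_) hsub
      exact Filter.mem_of_superset (Nat.hyperfilter_le_atTop (Filter.mem_atTop i.natAbs))
        (fun n hn => hn)
    obtain ⟨y, _, hy⟩ := CFGroupsAux.ultra_pigeon U (fun n => γ n i) hball hmem
    exact ⟨y, hy⟩
  choose α hα using hlim
  refine ⟨α, ?_⟩
  intro i j
  have hmem : ({n | γ n i = α i} ∩ {n | γ n j = α j} ∩ A ∩
      {n : ℕ | i.natAbs ≤ n ∧ j.natAbs ≤ n}) ∈ (U : Filter ℕ) := by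
    refine Filter.inter_mem (Filter.inter_mem (Filter.inter_mem (hα i) (hα j)) hA) ?_
    have : {n : ℕ | max i.natAbs j.natAbs ≤ n} ∈ (U : Filter ℕ) :=
      Nat.hyperfilter_le_atTop (Filter.mem_atTop _)
    exact Filter.mem_of_superset this (fun n hn => ⟨le_trans (le_max_left _ _) hn,
      le_trans (le_max_right _ _) hn⟩)
  obtain ⟨n, ⟨⟨⟨hni, hnj⟩, hnA⟩, hni2, hnj2⟩⟩ := Ultrafilter.nonempty_of_mem hmem
  rw [← hni, ← hnj]
  rcases le_or_gt i j with h | h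
  · have := keyγ n i j (by omega) h (by omega)
    rw [this]; omega
  · have := keyγ n j i (by omega) (by omega) (by omega)
    rw [SimpleGraph.dist_comm, this]; omega
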